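/- For every odd integer m > 1, the number of binary necklaces of length m, namely (1/m)·∑_{k ∣ m} φ(k)·2^{m/k}, is even; equivalently, 2m divides ∑_{k ∈ divisors(m)} φ(k)·2^{m/k}, where the sum ranges over the positive divisors k of m and φ denotes Euler's totient function. -/

import Mathlib

open Finset AddAction

/-- The shift action of `ZMod m` on binary words of length `m`. -/
instance necklaceShift (m : ℕ) : AddAction (ZMod m) (ZMod m → Bool) where
  vadd g f := fun x => f (x + g)
  zero_vadd f := by funext x; show f (x + 0) = f x; rw [add_zero]
  add_vadd g h f := by
    funext x
    show f (x + (g + h)) = f (x + g + h)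
    rw [add_assoc]

lemma necklace_fixedBy_card {m : ℕ} [NeZero m] (g : ZMod m) :
    Nat.card (fixedBy (ZMod m → Bool) g) = 2 ^ Nat.gcd m g.val := by
  classical
  set H := AddSubgroup.zmultiples g with hH
  -- the restriction map from functions on the quotient
  have hmk : ∀ x : ZMod m, (QuotientAddGroup.mk (x + g) : ZMod m ⧸ H) = QuotientAddGroup.mk x := by
    intro x
    rw [QuotientAddGroup.eq]
    have : -(x + g) + x = -g := by abel
    rw [this]
    exact neg_mem (AddSubgroup.mem_zmultiples g)
  let res : ((ZMod m ⧸ H) → Bool) → fixedBy (ZMod m → Bool) g := fun q =>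
    ⟨fun x => q (QuotientAddGroup.mk x), by
      show (g +ᵥ fun x => q (QuotientAddGroup.mk x)) = fun x => q (QuotientAddGroup.mk x)
      funext x
      show q (QuotientAddGroup.mk (x + g)) = q (QuotientAddGroup.mk x)
      rw [hmk]⟩
  have hbij : Function.Bijective res := by
    constructor
    · intro q₁ q₂ h
      funext y
      obtain ⟨x, rfl⟩ := QuotientAddGroup.mk_surjective y
      exact congrFun (congrArg Subtype.val h) x
    · rintro ⟨f, hf⟩
      have inv1 : ∀ x, f (x + g) = f x := fun x => congrFun hf x
      have invn : ∀ n : ℤ, ∀ x, f (x + n • g) = f x := by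
        intro n
        induction n using Int.induction_on with
        | zero => intro x; simp
        | succ k ih =>
          intro x
          have : x + ((k : ℤ) + 1) • g = (x + g) + (k : ℤ) • g := by
            rw [add_smul, one_smul]; abel
          rw [this, ih, inv1]
        | pred k ih =>
          intro x
          have : x + (-(k : ℤ) - 1) • g = (x - g) + (-(k : ℤ)) • g := by
            rw [sub_smul, one_smul]; abel
          rw [this, ih]
          have h := inv1 (x - g)
          rw [sub_add_cancel] at h
          exact h.symm
      refine ⟨Quotient.lift f ?_, ?_⟩
      · intro a b hab
        have hab' : -a + b ∈ H := QuotientAddGroup.leftRel_apply.mp hab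
        obtain ⟨n, hn⟩ := AddSubgroup.mem_zmultiples_iff.mp hab'
        have : b = a + n • g := by rw [hn]; abel
        rw [this, invn]
      · apply Subtype.ext
        funext x
        rfl
  have hcard : Nat.card (fixedBy (ZMod m → Bool) g) = Nat.card ((ZMod m ⧸ H) → Bool) :=
    (Nat.card_eq_of_bijective res hbij).symm
  rw [hcard, Nat.card_fun, Nat.card_eq_fintype_card (α := Bool), Fintype.card_bool]
  congr 1
  -- card of quotient is the gcd
  have hlag := AddSubgroup.card_eq_card_quotient_mul_card_addSubgroup H
  have hzH : Nat.card H = addOrderOf g := Nat.card_zmultiples g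
  have hg : ((g.val : ℕ) : ZMod m) = g := ZMod.natCast_rightInverse g
  have hord : addOrderOf g = m / Nat.gcd m g.val := by
    conv_lhs => rw [← hg]
    rw [ZMod.addOrderOf_coe g.val (NeZero.ne m)]
  have hmcard : Nat.card (ZMod m) = m := by
    rw [Nat.card_eq_fintype_card, ZMod.card]
  have hgcd_dvd : Nat.gcd m g.val ∣ m := Nat.gcd_dvd_left m g.val
  have hgcd_pos : 0 < Nat.gcd m g.val :=
    Nat.gcd_pos_of_pos_left _ (Nat.pos_of_ne_zero (NeZero.ne m))
  have hord_pos : 0 < addOrderOf g := by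
    rw [hord]
    exact Nat.div_pos (Nat.le_of_dvd (Nat.pos_of_ne_zero (NeZero.ne m)) hgcd_dvd) hgcd_pos
  have : Nat.card (ZMod m ⧸ H) = m / addOrderOf g := by
    rw [hmcard, hzH] at hlag
    exact (Nat.div_eq_of_eq_mul_left hord_pos hlag).symm
  rw [this, hord, Nat.div_div_self hgcd_dvd (NeZero.ne m)]

lemma necklace_dvd_sum (m : ℕ) (hm : 0 < m) :
    m ∣ ∑ k ∈ Nat.divisors m, Nat.totient k * 2 ^ (m / k) := by
  classical
  haveI : NeZero m := ⟨hm.ne'⟩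
  letI : ∀ a : ZMod m, Fintype (fixedBy (ZMod m → Bool) a) := fun a => Fintype.ofFinite _
  letI : Fintype (Quotient (AddAction.orbitRel (ZMod m) (ZMod m → Bool))) := Fintype.ofFinite _
  have hb := AddAction.sum_card_fixedBy_eq_card_orbits_mul_card_addGroup (ZMod m) (ZMod m → Bool)
  have hdvd : m ∣ ∑ a : ZMod m, Fintype.card (fixedBy (ZMod m → Bool) a) := by
    rw [hb, ZMod.card]
    exact dvd_mul_left m _
  have h1 : ∑ a : ZMod m, Fintype.card (fixedBy (ZMod m → Bool) a)
      = ∑ a : ZMod m, 2 ^ Nat.gcd m a.val := by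
    refine Finset.sum_congr rfl fun a _ => ?_
    rw [← Nat.card_eq_fintype_card, necklace_fixedBy_card a]
  have h2 : ∑ a : ZMod m, 2 ^ Nat.gcd m a.val = ∑ i ∈ range m, 2 ^ Nat.gcd m i := by
    refine Finset.sum_nbij' (fun a => a.val) (fun i => (i : ZMod m)) ?_ ?_ ?_ ?_ ?_
    · intro a _; exact Finset.mem_range.mpr (ZMod.val_lt a)
    · intro i _; exact Finset.mem_univ _
    · intro a _; exact ZMod.natCast_rightInverse a
    · intro i hi; exact ZMod.val_cast_of_lt (Finset.mem_range.mp hi)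
    · intro a _
      rfl
  have h3 : ∑ i ∈ range m, 2 ^ Nat.gcd m i
      = ∑ k ∈ Nat.divisors m, Nat.totient k * 2 ^ (m / k) := by
    rw [← Finset.sum_fiberwise_of_maps_to (g := fun i => Nat.gcd m i) (t := Nat.divisors m)
      (fun i _ => Nat.mem_divisors.mpr ⟨Nat.gcd_dvd_left m i, hm.ne'⟩)]
    rw [← Nat.sum_div_divisors m (fun k => Nat.totient k * 2 ^ (m / k))]
    refine Finset.sum_congr rfl fun d hd => ?_
    have hdvd' : d ∣ m := Nat.dvd_of_mem_divisors hd
    rw [Nat.div_div_self hdvd' hm.ne', Nat.totient_div_of_dvd hdvd']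
    calc ∑ i ∈ (range m).filter (fun i => Nat.gcd m i = d), 2 ^ Nat.gcd m i
        = ∑ _i ∈ (range m).filter (fun i => Nat.gcd m i = d), 2 ^ d :=
          Finset.sum_congr rfl fun i hi => by rw [(Finset.mem_filter.mp hi).2]
      _ = _ := by rw [Finset.sum_const, smul_eq_mul]
  rw [← h3, ← h2, ← h1]
  exact hdvd

/-- For every odd `m > 1`, the number of binary necklaces of length `m`,
`(1/m)·∑_{k ∣ m} φ(k)·2^{m/k}`, is even; equivalently `2m` divides the sum. -/
theorem necklace_count_even (m : ℕ) (hodd : Odd m) (hm : 1 < m) :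
    2 * m ∣ ∑ k ∈ Nat.divisors m, Nat.totient k * 2 ^ (m / k) := by
  have hm0 : 0 < m := by omega
  have h2 : 2 ∣ ∑ k ∈ Nat.divisors m, Nat.totient k * 2 ^ (m / k) := by
    refine Finset.dvd_sum fun k hk => ?_
    have hkdvd : k ∣ m := Nat.dvd_of_mem_divisors hk
    rcases eq_or_ne k 1 with rfl | hk1
    · refine Dvd.dvd.mul_left ?_ _
      exact dvd_pow_self 2 (by omega)
    · have hkodd : Odd k := hodd.of_dvd_nat hkdvd
      have hk2 : 2 < k := by
        have := Nat.pos_of_mem_divisors hk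
        rcases hkodd with ⟨j, hj⟩
        omega
      exact Dvd.dvd.mul_right ((Nat.totient_even hk2).two_dvd) _
  have hmdvd := necklace_dvd_sum m hm0
  have hcop : Nat.Coprime 2 m := (Nat.prime_two.coprime_iff_not_dvd).mpr (by
    have := Nat.odd_iff.mp hodd; omega)
  exact hcop.mul_dvd_of_dvd_of_dvd h2 hmdvd
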